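/- Let 𝓛 be a relational language and 𝒞 a class of finite 𝓛-structures. Then 𝒞 is a free amalgamation class (a Fraïssé class closed under free amalgams) if and only if 𝒞 = Forb_e(ℱ) for some family ℱ of finite structures each of which is a Gaifman clique (i.e., any two distinct points of F are contained together in some tuple satisfying a relation). -/

import Mathlib

open FirstOrder CategoryTheory

universe u v w

variable (L : FirstOrder.Language.{u, v})

/-- The identifications defining the free amalgam of `B₁` and `B₂` over `A`. -/
def amalgRel {A B₁ B₂ : Bundled.{w} L.Structure} (f₁ : A ↪[L] B₁) (f₂ : A ↪[L] B₂) :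
    (B₁ ⊕ B₂) → (B₁ ⊕ B₂) → Prop :=
  fun x y => ∃ a : A, x = Sum.inl (f₁ a) ∧ y = Sum.inr (f₂ a)

/-- The structure on the free amalgam: its relations are exactly those of `B₁`
together with those of `B₂` (no new relations across `B₁∖A` and `B₂∖A`). -/
def freeAmalgamStructure (hrel : ∀ n, IsEmpty (L.Functions n))
    {A B₁ B₂ : Bundled.{w} L.Structure} (f₁ : A ↪[L] B₁) (f₂ : A ↪[L] B₂) :
    L.Structure (Quot (amalgRel L f₁ f₂)) where
  funMap := fun {n} f _ => ((hrel n).elim f)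
  RelMap := fun {n} R v =>
    (∃ w : Fin n → B₁, (∀ i, Quot.mk _ (Sum.inl (w i)) = v i) ∧
      Language.Structure.RelMap R w) ∨
    (∃ w : Fin n → B₂, (∀ i, Quot.mk _ (Sum.inr (w i)) = v i) ∧
      Language.Structure.RelMap R w)

/-- The free amalgam of `B₁` and `B₂` over `A` (along `f₁`, `f₂`), as a bundled
structure. -/
def FreeAmalgam (hrel : ∀ n, IsEmpty (L.Functions n))
    {A B₁ B₂ : Bundled.{w} L.Structure} (f₁ : A ↪[L] B₁) (f₂ : A ↪[L] B₂) :
    Bundled.{w} L.Structure :=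
  ⟨Quot (amalgRel L f₁ f₂), freeAmalgamStructure L hrel f₁ f₂⟩

/-- `F` is a Gaifman clique: any two distinct points of `F` are contained together
in some tuple satisfying a relation. -/
def IsGaifmanClique (F : Bundled.{w} L.Structure) : Prop :=
  ∀ u v : F, u ≠ v → ∃ (n : ℕ) (R : L.Relations n) (t : Fin n → F),
    Language.Structure.RelMap R t ∧ (∃ i, t i = u) ∧ ∃ j, t j = v

/-- `Forb_e(ℱ)`: the class of finite structures into which no member of `ℱ` embeds. -/
def ForbE (ℱ : Set (Bundled.{w} L.Structure)) : Set (Bundled.{w} L.Structure) :=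
  {A | Finite A ∧ ∀ F ∈ ℱ, IsEmpty (F ↪[L] A)}

/-- A free amalgamation class: a class of finite structures, hereditary (hence
isomorphism-closed), with the joint embedding and amalgamation properties, and
closed under free amalgams. -/
def IsFreeAmalgamationClass (hrel : ∀ n, IsEmpty (L.Functions n))
    (K : Set (Bundled.{w} L.Structure)) : Prop :=
  (∀ M ∈ K, Finite M) ∧
  (∀ M ∈ K, ∀ N : Bundled.{w} L.Structure, Nonempty (N ↪[L] M) → N ∈ K) ∧
  (∀ B₁ ∈ K, ∀ B₂ ∈ K, ∃ C ∈ K, Nonempty (B₁ ↪[L] C) ∧ Nonempty (B₂ ↪[L] C)) ∧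
  (∀ A B₁ B₂ : Bundled.{w} L.Structure, A ∈ K → B₁ ∈ K → B₂ ∈ K →
    ∀ (f₁ : A ↪[L] B₁) (f₂ : A ↪[L] B₂), ∃ C ∈ K, ∃ (g₁ : B₁ ↪[L] C) (g₂ : B₂ ↪[L] C),
      g₁.comp f₁ = g₂.comp f₂) ∧
  (∀ A B₁ B₂ : Bundled.{w} L.Structure, A ∈ K → B₁ ∈ K → B₂ ∈ K →
    ∀ (f₁ : A ↪[L] B₁) (f₂ : A ↪[L] B₂), FreeAmalgam L hrel f₁ f₂ ∈ K)

namespace FreeAmalgAux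

variable {L : FirstOrder.Language.{u, v}}
variable {A B₁ B₂ : Bundled.{w} L.Structure} (f₁ : A ↪[L] B₁) (f₂ : A ↪[L] B₂)

open Classical in
noncomputable def anorm : (B₁ ⊕ B₂) → (B₁ ⊕ B₂)
  | Sum.inl b => Sum.inl b
  | Sum.inr c => if h : ∃ a : A, c = f₂ a then Sum.inl (f₁ h.choose) else Sum.inr c

lemma anorm_rel : ∀ x y, amalgRel L f₁ f₂ x y → anorm f₁ f₂ x = anorm f₁ f₂ y := by
  rintro _ _ ⟨a, rfl, rfl⟩
  have h : ∃ a' : A, f₂ a = f₂ a' := ⟨a, rfl⟩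
  have ha : h.choose = a := f₂.injective h.choose_spec.symm
  simp [anorm, dif_pos h, ha]

noncomputable def qanorm : Quot (amalgRel L f₁ f₂) → (B₁ ⊕ B₂) :=
  Quot.lift (anorm f₁ f₂) (anorm_rel f₁ f₂)

lemma mk_inl_inj {b b' : B₁}
    (h : Quot.mk (amalgRel L f₁ f₂) (Sum.inl b) = Quot.mk _ (Sum.inl b')) : b = b' := by
  have H := congrArg (qanorm f₁ f₂) h
  change anorm f₁ f₂ (Sum.inl b) = anorm f₁ f₂ (Sum.inl b') at H
  simpa [anorm] using H

lemma mk_inr_inj {c c' : B₂}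
    (h : Quot.mk (amalgRel L f₁ f₂) (Sum.inr c) = Quot.mk _ (Sum.inr c')) : c = c' := by
  have H := congrArg (qanorm f₁ f₂) h
  change anorm f₁ f₂ (Sum.inr c) = anorm f₁ f₂ (Sum.inr c') at H
  simp only [anorm] at H
  by_cases h1 : ∃ a : A, c = f₂ a <;> by_cases h2 : ∃ a : A, c' = f₂ a
  · rw [dif_pos h1, dif_pos h2] at H
    rw [h1.choose_spec, h2.choose_spec, f₁.injective (Sum.inl.inj H)]
  · rw [dif_pos h1, dif_neg h2] at H; exact absurd H (by simp)
  · rw [dif_neg h1, dif_pos h2] at H; exact absurd H (by simp)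
  · rw [dif_neg h1, dif_neg h2] at H; exact Sum.inr.inj H

lemma mk_inl_inr {b : B₁} {c : B₂}
    (h : Quot.mk (amalgRel L f₁ f₂) (Sum.inl b) = Quot.mk _ (Sum.inr c)) :
    ∃ a : A, b = f₁ a ∧ c = f₂ a := by
  have H := congrArg (qanorm f₁ f₂) h
  change anorm f₁ f₂ (Sum.inl b) = anorm f₁ f₂ (Sum.inr c) at H
  simp only [anorm] at H
  by_cases h2 : ∃ a : A, c = f₂ a
  · rw [dif_pos h2] at H
    exact ⟨h2.choose, Sum.inl.inj H, h2.choose_spec⟩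
  · rw [dif_neg h2] at H; exact absurd H (by simp)

lemma quot_cases (q : Quot (amalgRel L f₁ f₂)) :
    (∃ b : B₁, q = Quot.mk _ (Sum.inl b)) ∨ (∃ c : B₂, q = Quot.mk _ (Sum.inr c)) := by
  induction q using Quot.ind with
  | _ x => rcases x with b | c
           · exact Or.inl ⟨b, rfl⟩
           · exact Or.inr ⟨c, rfl⟩

end FreeAmalgAux

namespace FreeAmalgAux2

open FreeAmalgAux

variable {L : FirstOrder.Language.{u, v}} (hrel : ∀ n, IsEmpty (L.Functions n))
variable {A B₁ B₂ : Bundled.{w} L.Structure} (f₁ : A ↪[L] B₁) (f₂ : A ↪[L] B₂)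

lemma relMap_free {n : ℕ} (R : L.Relations n) (x : Fin n → FreeAmalgam L hrel f₁ f₂) :
    Language.Structure.RelMap R x ↔
      ((∃ w : Fin n → B₁, (∀ i, Quot.mk (amalgRel L f₁ f₂) (Sum.inl (w i)) = x i) ∧
        Language.Structure.RelMap R w) ∨
      (∃ w : Fin n → B₂, (∀ i, Quot.mk (amalgRel L f₁ f₂) (Sum.inr (w i)) = x i) ∧
        Language.Structure.RelMap R w)) := Iff.rfl

def inl : B₁ ↪[L] FreeAmalgam L hrel f₁ f₂ := by
  refine ⟨⟨fun b => Quot.mk _ (Sum.inl b), fun b b' h => mk_inl_inj f₁ f₂ h⟩,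
    fun {n} f x => ((hrel n).elim f), fun {n} R x => ?_⟩
  rw [relMap_free]
  constructor
  · rintro (⟨w, hw, hR⟩ | ⟨w, hw, hR⟩)
    · rwa [show w = x from funext fun i => mk_inl_inj f₁ f₂ (hw i)] at hR
    · have h' : ∀ i, ∃ a : A, x i = f₁ a ∧ w i = f₂ a :=
        fun i => mk_inl_inr f₁ f₂ (hw i).symm
      choose a ha₁ ha₂ using h'
      have hwa : w = ⇑f₂ ∘ a := funext ha₂
      have hA : Language.Structure.RelMap R a := (f₂.map_rel R a).mp (by rwa [hwa] at hR)
      have := (f₁.map_rel R a).mpr hA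
      rwa [show ⇑f₁ ∘ a = x from funext fun i => (ha₁ i).symm] at this
  · intro h
    exact Or.inl ⟨x, fun i => rfl, h⟩

def inr : B₂ ↪[L] FreeAmalgam L hrel f₁ f₂ := by
  refine ⟨⟨fun c => Quot.mk _ (Sum.inr c), fun c c' h => mk_inr_inj f₁ f₂ h⟩,
    fun {n} f x => ((hrel n).elim f), fun {n} R x => ?_⟩
  rw [relMap_free]
  constructor
  · rintro (⟨w, hw, hR⟩ | ⟨w, hw, hR⟩)
    · have h' : ∀ i, ∃ a : A, w i = f₁ a ∧ x i = f₂ a :=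
        fun i => mk_inl_inr f₁ f₂ (hw i)
      choose a ha₁ ha₂ using h'
      have hwa : w = ⇑f₁ ∘ a := funext ha₁
      have hA : Language.Structure.RelMap R a := (f₁.map_rel R a).mp (by rwa [hwa] at hR)
      have := (f₂.map_rel R a).mpr hA
      rwa [show ⇑f₂ ∘ a = x from funext fun i => (ha₂ i).symm] at this
    · rwa [show w = x from funext fun i => mk_inr_inj f₁ f₂ (hw i)] at hR
  · intro h
    exact Or.inr ⟨x, fun i => rfl, h⟩

lemma inl_comp_inr :
    (inl hrel f₁ f₂).comp f₁ = (inr hrel f₁ f₂).comp f₂ :=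
  Language.Embedding.ext fun a => Quot.sound ⟨a, rfl, rfl⟩

lemma finite_freeAmalgam [Finite B₁] [Finite B₂] : Finite (FreeAmalgam L hrel f₁ f₂) :=
  Finite.of_surjective (Quot.mk (amalgRel L f₁ f₂)) Quot.mk_surjective

lemma amalg_cases (q : FreeAmalgam L hrel f₁ f₂) :
    (∃ b : B₁, q = Quot.mk (amalgRel L f₁ f₂) (Sum.inl b)) ∨
    (∃ c : B₂, q = Quot.mk (amalgRel L f₁ f₂) (Sum.inr c)) :=
  quot_cases f₁ f₂ q

lemma clique_embed_cases {F : Bundled.{w} L.Structure} (hF : IsGaifmanClique L F)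
    (e : F ↪[L] FreeAmalgam L hrel f₁ f₂) :
    Nonempty (F ↪[L] B₁) ∨ Nonempty (F ↪[L] B₂) := by
  by_cases hc₁ : ∀ u : F, ∃ b : B₁, e u = Quot.mk _ (Sum.inl b)
  · refine Or.inl ⟨⟨⟨fun u => (hc₁ u).choose, fun u u' h => ?_⟩,
      fun {n} f x => ((hrel n).elim f), fun {n} R x => ?_⟩⟩
    · apply e.injective
      rw [(hc₁ u).choose_spec, (hc₁ u').choose_spec]
      exact congrArg (fun b => Quot.mk (amalgRel L f₁ f₂) (Sum.inl b)) h
    · have h3 : ⇑e ∘ x = ⇑(inl hrel f₁ f₂) ∘ (fun i => (hc₁ (x i)).choose) :=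
        funext fun i => (hc₁ (x i)).choose_spec
      rw [← e.map_rel R x, h3]
      exact ((inl hrel f₁ f₂).map_rel R _).symm
  by_cases hc₂ : ∀ u : F, ∃ c : B₂, e u = Quot.mk _ (Sum.inr c)
  · refine Or.inr ⟨⟨⟨fun u => (hc₂ u).choose, fun u u' h => ?_⟩,
      fun {n} f x => ((hrel n).elim f), fun {n} R x => ?_⟩⟩
    · apply e.injective
      rw [(hc₂ u).choose_spec, (hc₂ u').choose_spec]
      exact congrArg (fun c => Quot.mk (amalgRel L f₁ f₂) (Sum.inr c)) h
    · have h3 : ⇑e ∘ x = ⇑(inr hrel f₁ f₂) ∘ (fun i => (hc₂ (x i)).choose) :=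
        funext fun i => (hc₂ (x i)).choose_spec
      rw [← e.map_rel R x, h3]
      exact ((inr hrel f₁ f₂).map_rel R _).symm
  exfalso
  obtain ⟨u, hu⟩ := not_forall.mp hc₁
  obtain ⟨v, hv⟩ := not_forall.mp hc₂
  have hne : u ≠ v := by
    rintro rfl
    rcases amalg_cases hrel f₁ f₂ (e u) with ⟨b, hb⟩ | ⟨c, hc⟩
    · exact hu ⟨b, hb⟩
    · exact hv ⟨c, hc⟩
  obtain ⟨n, R, t, hR, ⟨i, hi⟩, ⟨j, hj⟩⟩ := hF u v hne
  have hrm := (e.map_rel R t).mpr hR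
  rw [relMap_free] at hrm
  rcases hrm with ⟨w, hw, -⟩ | ⟨w, hw, -⟩
  · exact hu ⟨w i, by rw [← hi]; exact (hw i).symm⟩
  · exact hv ⟨w j, by rw [← hj]; exact (hw j).symm⟩

lemma freeAmalgam_mem_forbE {ℱ : Set (Bundled.{w} L.Structure)}
    (hℱ : ∀ F ∈ ℱ, IsGaifmanClique L F)
    (h₁ : B₁ ∈ ForbE L ℱ) (h₂ : B₂ ∈ ForbE L ℱ) :
    FreeAmalgam L hrel f₁ f₂ ∈ ForbE L ℱ := by
  haveI := h₁.1; haveI := h₂.1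
  refine ⟨finite_freeAmalgam hrel f₁ f₂, fun F hF => ⟨fun e => ?_⟩⟩
  rcases clique_embed_cases hrel f₁ f₂ (hℱ F hF) e with hg | hg
  · exact (h₁.2 F hF).false hg.some
  · exact (h₂.2 F hF).false hg.some

end FreeAmalgAux2

namespace FreeAmalgAux3

open FreeAmalgAux FreeAmalgAux2

variable {L : FirstOrder.Language.{u, v}} (hrel : ∀ n, IsEmpty (L.Functions n))

def emptyStructure : L.Structure PEmpty.{w + 1} where
  funMap := fun {n} f _ => ((hrel n).elim f)
  RelMap := fun _ _ => False

def emptyBundled : Bundled.{w} L.Structure := ⟨PEmpty, emptyStructure hrel⟩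

def emptyEmbedding (hrel0 : IsEmpty (L.Relations 0)) (B : Bundled.{w} L.Structure) : emptyBundled hrel ↪[L] B := by
  refine ⟨⟨fun x => x.elim, fun x => x.elim⟩, fun {n} f x => ((hrel n).elim f),
    fun {n} R x => ?_⟩
  cases n with
  | zero => exact hrel0.elim R
  | succ n => exact (x 0).elim

lemma forbE_hereditary {ℱ : Set (Bundled.{w} L.Structure)} {M : Bundled.{w} L.Structure}
    (hM : M ∈ ForbE L ℱ) {N : Bundled.{w} L.Structure} (e : N ↪[L] M) : N ∈ ForbE L ℱ := by
  haveI := hM.1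
  exact ⟨Finite.of_injective e e.injective, fun F hF => ⟨fun g => (hM.2 F hF).false (e.comp g)⟩⟩

lemma forbE_isFAC (hrel0 : IsEmpty (L.Relations 0)) {ℱ : Set (Bundled.{w} L.Structure)} (hℱ : ∀ F ∈ ℱ, IsGaifmanClique L F) :
    IsFreeAmalgamationClass L hrel (ForbE L ℱ) := by
  refine ⟨fun M hM => hM.1, fun M hM N hN => forbE_hereditary hM hN.some, ?_, ?_, ?_⟩
  · intro B₁ h₁ B₂ h₂
    exact ⟨FreeAmalgam L hrel (emptyEmbedding hrel hrel0 B₁) (emptyEmbedding hrel hrel0 B₂),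
      freeAmalgam_mem_forbE hrel _ _ hℱ h₁ h₂, ⟨inl hrel _ _⟩, ⟨inr hrel _ _⟩⟩
  · intro A B₁ B₂ hA h₁ h₂ f₁ f₂
    exact ⟨FreeAmalgam L hrel f₁ f₂, freeAmalgam_mem_forbE hrel f₁ f₂ hℱ h₁ h₂,
      inl hrel f₁ f₂, inr hrel f₁ f₂, inl_comp_inr hrel f₁ f₂⟩
  · intro A B₁ B₂ hA h₁ h₂ f₁ f₂
    exact freeAmalgam_mem_forbE hrel f₁ f₂ hℱ h₁ h₂

end FreeAmalgAux3

namespace FreeAmalgAux4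

open FreeAmalgAux FreeAmalgAux2 FreeAmalgAux3

variable {L : FirstOrder.Language.{u, v}} (hrel : ∀ n, IsEmpty (L.Functions n))

def subOf {M : Type w} [L.Structure M] (s : Set M) : L.Substructure M :=
  ⟨s, fun {n} f => ((hrel n).elim f)⟩

lemma mem_subOf {M : Type w} [L.Structure M] {s : Set M} {x : M} :
    x ∈ subOf hrel s ↔ x ∈ s := Iff.rfl

lemma nonclique_step {K : Set (Bundled.{w} L.Structure)}
    (h5 : ∀ A B₁ B₂ : Bundled.{w} L.Structure, A ∈ K → B₁ ∈ K → B₂ ∈ K →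
      ∀ (f₁ : A ↪[L] B₁) (f₂ : A ↪[L] B₂), FreeAmalgam L hrel f₁ f₂ ∈ K)
    (h2 : ∀ M ∈ K, ∀ N : Bundled.{w} L.Structure, Nonempty (N ↪[L] M) → N ∈ K)
    (M : Bundled.{w} L.Structure) (u v : ↥M) (hne : u ≠ v)
    (hno : ¬∃ (k : ℕ) (R : L.Relations k) (t : Fin k → ↥M),
      Language.Structure.RelMap R t ∧ (∃ i, t i = u) ∧ (∃ j, t j = v))
    (hKA : (⟨↥(subOf hrel (({u}ᶜ ∩ {v}ᶜ) : Set ↥M)), inferInstance⟩ :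
      Bundled.{w} L.Structure) ∈ K)
    (hK1 : (⟨↥(subOf hrel (({v}ᶜ) : Set ↥M)), inferInstance⟩ : Bundled.{w} L.Structure) ∈ K)
    (hK2 : (⟨↥(subOf hrel (({u}ᶜ) : Set ↥M)), inferInstance⟩ : Bundled.{w} L.Structure) ∈ K) :
    M ∈ K := by
  classical
  set S₁ := subOf hrel (({v}ᶜ) : Set ↥M) with hS₁
  set S₂ := subOf hrel (({u}ᶜ) : Set ↥M) with hS₂
  set SA := subOf hrel (({u}ᶜ ∩ {v}ᶜ) : Set ↥M) with hSA
  have hA1 : SA ≤ S₁ := fun x hx => hx.2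
  have hA2 : SA ≤ S₂ := fun x hx => hx.1
  let BA : Bundled.{w} L.Structure := ⟨↥SA, inferInstance⟩
  let B₁ : Bundled.{w} L.Structure := ⟨↥S₁, inferInstance⟩
  let B₂ : Bundled.{w} L.Structure := ⟨↥S₂, inferInstance⟩
  let f₁ : BA ↪[L] B₁ := Language.Substructure.inclusion hA1
  let f₂ : BA ↪[L] B₂ := Language.Substructure.inclusion hA2
  have hC : FreeAmalgam L hrel f₁ f₂ ∈ K := h5 BA B₁ B₂ hKA hK1 hK2 f₁ f₂
  refine h2 _ hC M ⟨⟨⟨fun x => if hx : x = v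
      then Quot.mk (amalgRel L f₁ f₂) (Sum.inr
        ⟨x, (mem_subOf hrel).mpr (Set.mem_compl_singleton_iff.mpr
          (fun h => hne (h.symm.trans hx)))⟩)
      else Quot.mk (amalgRel L f₁ f₂) (Sum.inl
        ⟨x, (mem_subOf hrel).mpr (Set.mem_compl_singleton_iff.mpr hx)⟩), ?_⟩,
    fun {k} f x => ((hrel k).elim f), fun {k} R x => ?_⟩⟩
  · -- injectivity
    intro x y hxy
    dsimp only at hxy
    by_cases hx : x = v <;> by_cases hy : y = v
    · exact hx.trans hy.symm
    · erw [dif_pos hx, dif_neg hy] at hxy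
      obtain ⟨a, -, ha2⟩ := mk_inl_inr f₁ f₂ hxy.symm
      have haA : (a : ↥M) ∈ (({u}ᶜ ∩ {v}ᶜ) : Set ↥M) := a.2
      exact absurd ((congrArg Subtype.val ha2).symm.trans hx) haA.2
    · erw [dif_neg hx, dif_pos hy] at hxy
      obtain ⟨a, -, ha2⟩ := mk_inl_inr f₁ f₂ hxy
      have haA : (a : ↥M) ∈ (({u}ᶜ ∩ {v}ᶜ) : Set ↥M) := a.2
      exact absurd ((congrArg Subtype.val ha2).symm.trans hy) haA.2
    · erw [dif_neg hx, dif_neg hy] at hxy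
      exact congrArg Subtype.val (mk_inl_inj f₁ f₂ hxy)
  · -- map_rel
    dsimp only
    rw [relMap_free]
    constructor
    · rintro (⟨w, hw, hR⟩ | ⟨w, hw, hR⟩)
      · simp only [Function.comp_apply] at hw
        have hxv : ∀ i, x i ≠ v := by
          intro i hxi
          have h' := hw i
          erw [dif_pos hxi] at h'
          obtain ⟨a, -, ha2⟩ := mk_inl_inr f₁ f₂ h'
          have haA : (a : ↥M) ∈ (({u}ᶜ ∩ {v}ᶜ) : Set ↥M) := a.2
          exact haA.2 ((congrArg Subtype.val ha2).symm.trans hxi)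
        have hwx : ∀ i, ((w i : ↥M)) = x i := by
          intro i
          have h' := hw i
          erw [dif_neg (hxv i)] at h'
          exact congrArg Subtype.val (mk_inl_inj f₁ f₂ h')
        have hRR := (S₁.subtype.map_rel R w).mpr hR
        rwa [show (⇑S₁.subtype ∘ w) = x from funext fun i => hwx i] at hRR
      · simp only [Function.comp_apply] at hw
        have hxu : ∀ i, x i ≠ u := by
          intro i hxi
          have hxiv : x i ≠ v := by rw [hxi]; exact hne
          have h' := hw i
          erw [dif_neg hxiv] at h'
          obtain ⟨a, ha1, -⟩ := mk_inl_inr f₁ f₂ h'.symm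
          have haA : (a : ↥M) ∈ (({u}ᶜ ∩ {v}ᶜ) : Set ↥M) := a.2
          exact haA.1 ((congrArg Subtype.val ha1).symm.trans hxi)
        have hwx : ∀ i, ((w i : ↥M)) = x i := by
          intro i
          have h' := hw i
          by_cases hxi : x i = v
          · erw [dif_pos hxi] at h'
            exact congrArg Subtype.val (mk_inr_inj f₁ f₂ h')
          · erw [dif_neg hxi] at h'
            obtain ⟨a, ha1, ha2⟩ := mk_inl_inr f₁ f₂ h'.symm
            exact (congrArg Subtype.val ha2).trans (congrArg Subtype.val ha1).symm
        have hRR := (S₂.subtype.map_rel R w).mpr hR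
        rwa [show (⇑S₂.subtype ∘ w) = x from funext fun i => hwx i] at hRR
    · intro hR
      by_cases hv' : ∃ i, x i = v
      · have hxu : ∀ j, x j ≠ u := by
          intro j hj
          obtain ⟨i, hi⟩ := hv'
          exact hno ⟨k, R, x, hR, ⟨j, hj⟩, ⟨i, hi⟩⟩
        refine Or.inr ⟨fun j => ⟨x j, (mem_subOf hrel).mpr
          (Set.mem_compl_singleton_iff.mpr (hxu j))⟩, fun j => ?_,
          (S₂.subtype.map_rel R _).mp hR⟩
        simp only [Function.comp_apply]
        by_cases hxj : x j = v
        · erw [dif_pos hxj]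
        · erw [dif_neg hxj]
          refine (Quot.sound ⟨⟨x j, (mem_subOf hrel).mpr
            ⟨Set.mem_compl_singleton_iff.mpr (hxu j),
             Set.mem_compl_singleton_iff.mpr hxj⟩⟩, ?_, ?_⟩).symm
          · exact congrArg Sum.inl (Subtype.ext rfl)
          · exact congrArg Sum.inr (Subtype.ext rfl)
      · have hxv : ∀ i, x i ≠ v := fun i hi => hv' ⟨i, hi⟩
        refine Or.inl ⟨fun i => ⟨x i, (mem_subOf hrel).mpr
          (Set.mem_compl_singleton_iff.mpr (hxv i))⟩, fun i => ?_,
          (S₁.subtype.map_rel R _).mp hR⟩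
        simp only [Function.comp_apply]
        erw [dif_neg (hxv i)]

end FreeAmalgAux4

namespace FreeAmalgAux5

open FreeAmalgAux FreeAmalgAux2 FreeAmalgAux3 FreeAmalgAux4

variable {L : FirstOrder.Language.{u, v}} (hrel : ∀ n, IsEmpty (L.Functions n))

lemma forb_subset {K : Set (Bundled.{w} L.Structure)}
    (hfac : IsFreeAmalgamationClass L hrel K) :
    ForbE L {F | IsGaifmanClique L F ∧ F ∉ K} ⊆ K := by
  obtain ⟨h1, h2, h3, h4, h5⟩ := hfac
  have clique_case : ∀ M ∈ ForbE L {F | IsGaifmanClique L F ∧ F ∉ K},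
      IsGaifmanClique L M → M ∈ K := by
    intro M hM hclq
    by_contra hMK
    exact (hM.2 M ⟨hclq, hMK⟩).false (Language.Embedding.refl L M)
  suffices H : ∀ n : ℕ, ∀ M : Bundled.{w} L.Structure, Nat.card M ≤ n →
      M ∈ ForbE L {F | IsGaifmanClique L F ∧ F ∉ K} → M ∈ K by
    intro M hM
    exact H (Nat.card M) M le_rfl hM
  intro n
  induction n with
  | zero =>
    intro M hcard hM
    haveI := hM.1
    haveI : IsEmpty (↥M) := by
      rcases Nat.card_eq_zero.mp (Nat.le_zero.mp hcard) with h | h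
      · exact h
      · haveI := h; exact (not_finite ↥M).elim
    exact clique_case M hM (fun u _ _ => isEmptyElim u)
  | succ n ih =>
    intro M hcard hM
    by_cases hclq : IsGaifmanClique L M
    · exact clique_case M hM hclq
    obtain ⟨u, hu⟩ := not_forall.mp hclq
    obtain ⟨v, hv⟩ := not_forall.mp hu
    obtain ⟨hne, hno⟩ := _root_.not_imp.mp hv
    haveI := hM.1
    have cardlt : ∀ (s : Set ↥M) (x : ↥M), x ∉ s →
        Nat.card ↥(subOf hrel s) < Nat.card ↥M := by
      intro s x hx
      haveI : Fintype ↥M := Fintype.ofFinite _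
      haveI : Fintype ↥(subOf hrel s) := Fintype.ofFinite _
      rw [Nat.card_eq_fintype_card, Nat.card_eq_fintype_card]
      refine Fintype.card_lt_of_injective_of_notMem _ Subtype.val_injective (b := x) ?_
      rw [Subtype.range_coe_subtype]
      exact hx
    have hsub : ∀ s : Set ↥M, (⟨↥(subOf hrel s), inferInstance⟩ : Bundled.{w} L.Structure) ∈
        ForbE L {F | IsGaifmanClique L F ∧ F ∉ K} :=
      fun s => forbE_hereditary hM ((subOf hrel s).subtype)
    have hK : ∀ (s : Set ↥M) (x : ↥M), x ∉ s →
        (⟨↥(subOf hrel s), inferInstance⟩ : Bundled.{w} L.Structure) ∈ K := by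
      intro s x hx
      exact ih _ (Nat.lt_succ_iff.mp (lt_of_lt_of_le (cardlt s x hx) hcard)) (hsub s)
    exact nonclique_step hrel h5 h2 M u v hne hno
      (hK _ u (fun h => h.1 rfl))
      (hK _ v (fun h => h rfl))
      (hK _ u (fun h => h rfl))

end FreeAmalgAux5


/-- A class of finite structures in a relational language is a free amalgamation
class iff it is `Forb_e(ℱ)` for some family `ℱ` of Gaifman cliques. -/
theorem freeAmalgamationClass_iff_forb_gaifman_cliques
    (hrel : ∀ n, IsEmpty (L.Functions n)) (hrel0 : IsEmpty (L.Relations 0))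
    (K : Set (Bundled.{w} L.Structure)) :
    IsFreeAmalgamationClass L hrel K ↔
      ∃ ℱ : Set (Bundled.{w} L.Structure),
        (∀ F ∈ ℱ, IsGaifmanClique L F) ∧ K = ForbE L ℱ := by
  constructor
  · intro hfac
    refine ⟨{F | IsGaifmanClique L F ∧ F ∉ K}, fun F hF => hF.1,
      Set.Subset.antisymm ?_ (FreeAmalgAux5.forb_subset hrel hfac)⟩
    intro M hM
    exact ⟨hfac.1 M hM, fun F hF => ⟨fun e => hF.2 (hfac.2.1 M hM F ⟨e⟩)⟩⟩
  · rintro ⟨ℱ, hℱ, rfl⟩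
    exact FreeAmalgAux3.forbE_isFAC hrel hrel0 hℱ
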